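/- For a finite connected simple graph G, dmg(G) = 1 if and only if rad(G) = 2 and there exists a center vertex c of G such that for every w ∈ V(G) \ N[c] there exists s ∈ N[c] with N(w) ⊆ N[s] (i.e., s dominates w). -/
import Mathlib


open SimpleGraph

/-!
Formalization of the game of Cops and Robber (one cop, one robber) and the damage number.

Round 0: the cop chooses a starting vertex, then the robber chooses a starting vertex.
In each subsequent round the cop moves to an adjacent vertex or passes, after which the
robber moves to an adjacent vertex or passes.  Strategies are modelled as functions of
the full history of positions (most recent first).
-/

/-- A cop strategy: an initial vertex together with a move function taking the history of
cop positions (most recent first, nonempty) and of robber positions (most recent first)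
to the cop's next position. -/
structure CopStrategy (V : Type*) where
  init : V
  move : List V → List V → V

/-- A robber strategy: an initial vertex chosen in response to the cop's initial vertex,
together with a move function taking the history of cop positions (most recent first,
including the cop's move from the current round) and of robber positions (most recent
first) to the robber's next position. -/
structure RobberStrategy (V : Type*) where
  init : V → V
  move : List V → List V → V

variable {V : Type*}

/-- A cop move function is legal for `G` if from any position it either passes or
moves along an edge of `G`. -/
def LegalCopMove (G : SimpleGraph V) (cs : List V → List V → V) : Prop :=
  ∀ (c : V) (ch rh : List V), cs (c :: ch) rh = c ∨ G.Adj c (cs (c :: ch) rh)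

/-- A robber move function is legal for `G` if from any position it either passes or
moves along an edge of `G`. -/
def LegalRobMove (G : SimpleGraph V) (rs : List V → List V → V) : Prop :=
  ∀ (r : V) (ch rh : List V), rs ch (r :: rh) = r ∨ G.Adj r (rs ch (r :: rh))

/-- A legal cop strategy: every move passes or goes along an edge. -/
def CopStrategy.Legal (G : SimpleGraph V) (CS : CopStrategy V) : Prop :=
  LegalCopMove G CS.move

/-- A legal robber strategy: every move passes or goes along an edge. -/
def RobberStrategy.Legal (G : SimpleGraph V) (RS : RobberStrategy V) : Prop :=
  LegalRobMove G RS.move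

/-- `play CS RS n = (cₙ, rₙ, earlier cop positions, earlier robber positions)`:
the state of the game after round `n`, when the cop plays `CS` and the robber plays `RS`.
In each round the cop moves first, then the robber moves. -/
def play (CS : CopStrategy V) (RS : RobberStrategy V) : ℕ → V × V × List V × List V
  | 0 => (CS.init, RS.init CS.init, [], [])
  | n + 1 =>
    let p := play CS RS n
    let c := CS.move (p.1 :: p.2.2.1) (p.2.1 :: p.2.2.2)
    let r := RS.move (c :: p.1 :: p.2.2.1) (p.2.1 :: p.2.2.2)
    (c, r, p.1 :: p.2.2.1, p.2.1 :: p.2.2.2)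

/-- The cop's position after its move in round `n`. -/
def copPos (CS : CopStrategy V) (RS : RobberStrategy V) (n : ℕ) : V := (play CS RS n).1

/-- The robber's position after its move in round `n`. -/
def robPos (CS : CopStrategy V) (RS : RobberStrategy V) (n : ℕ) : V := (play CS RS n).2.1

/-- The robber damages `v`: at the end of some round `n` the robber occupies `v`, having
never been captured up to that point (neither by moving onto the cop, nor by the cop's
move in any round up to and including round `n + 1`); it then passes or moves in
round `n + 1`, damaging `v`. -/
def Damages (CS : CopStrategy V) (RS : RobberStrategy V) (v : V) : Prop :=
  ∃ n, robPos CS RS n = v ∧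
    ∀ k ≤ n, copPos CS RS k ≠ robPos CS RS k ∧ copPos CS RS (k + 1) ≠ robPos CS RS k

/-- The set of vertices damaged by the robber during the play of `CS` against `RS`. -/
def damageSet (CS : CopStrategy V) (RS : RobberStrategy V) : Set V :=
  {v | Damages CS RS v}

/-- The damage number of `G`: the minimum over legal cop strategies of the maximum over
legal robber strategies of the number of distinct damaged vertices. -/
noncomputable def dmg (G : SimpleGraph V) : ℕ :=
  sInf { n | ∃ CS : CopStrategy V, CS.Legal G ∧
    ∀ RS : RobberStrategy V, RS.Legal G → (damageSet CS RS).ncard ≤ n }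

/-- A cop strategy passes during the first round. -/
def CopStrategy.PassesFirst (CS : CopStrategy V) : Prop :=
  ∀ r : V, CS.move [CS.init] [r] = CS.init

/-- The damage number of `G` when the cop is required to pass during the first round. -/
noncomputable def dmg' (G : SimpleGraph V) : ℕ :=
  sInf { n | ∃ CS : CopStrategy V, CS.Legal G ∧ CS.PassesFirst ∧
    ∀ RS : RobberStrategy V, RS.Legal G → (damageSet CS RS).ncard ≤ n }

/-- The eccentricity of a vertex: the maximum distance from `u` to any vertex. -/
noncomputable def ecc (G : SimpleGraph V) (u : V) : ℕ := sSup (Set.range (G.dist u))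

/-- The radius of a graph: the minimum eccentricity over all vertices. -/
noncomputable def gRadius (G : SimpleGraph V) : ℕ := sInf (Set.range (ecc G))

/-- The closed neighbourhood `N[v]` of a vertex, as a set. -/
def cN (G : SimpleGraph V) (v : V) : Set V := insert v (G.neighborSet v)

/-- `v` dominates `u` if `N(u) ⊆ N[v]`. -/
def Dominates (G : SimpleGraph V) (v u : V) : Prop :=
  G.neighborSet u ⊆ cN G v

/-! ### Auxiliary machinery for the main theorem -/

section Aux

variable {G : SimpleGraph V}

lemma mem_cN {v w : V} : w ∈ cN G v ↔ w = v ∨ G.Adj v w := by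
  simp [cN, Set.mem_insert_iff, SimpleGraph.mem_neighborSet]

lemma self_mem_cN (v : V) : v ∈ cN G v := mem_cN.mpr (Or.inl rfl)

/-- Basic unfolding lemmas for `play`. -/
lemma copPos_zero (CS : CopStrategy V) (RS : RobberStrategy V) :
    copPos CS RS 0 = CS.init := rfl

lemma robPos_zero (CS : CopStrategy V) (RS : RobberStrategy V) :
    robPos CS RS 0 = RS.init CS.init := rfl

lemma copPos_succ (CS : CopStrategy V) (RS : RobberStrategy V) (n : ℕ) :
    copPos CS RS (n + 1) =
      CS.move (copPos CS RS n :: (play CS RS n).2.2.1)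
        (robPos CS RS n :: (play CS RS n).2.2.2) := rfl

lemma robPos_succ (CS : CopStrategy V) (RS : RobberStrategy V) (n : ℕ) :
    robPos CS RS (n + 1) =
      RS.move (copPos CS RS (n + 1) :: copPos CS RS n :: (play CS RS n).2.2.1)
        (robPos CS RS n :: (play CS RS n).2.2.2) := rfl

/-- A legal cop either passes or moves along an edge, in terms of `copPos`. -/
lemma cop_step {CS : CopStrategy V} (hCS : CS.Legal G) (RS : RobberStrategy V) (n : ℕ) :
    copPos CS RS (n + 1) = copPos CS RS n ∨
      G.Adj (copPos CS RS n) (copPos CS RS (n + 1)) := by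
  rw [copPos_succ]
  exact hCS (copPos CS RS n) (play CS RS n).2.2.1 (robPos CS RS n :: (play CS RS n).2.2.2)

/-- A legal robber either passes or moves along an edge, in terms of `robPos`. -/
lemma rob_step (CS : CopStrategy V) {RS : RobberStrategy V} (hRS : RS.Legal G) (n : ℕ) :
    robPos CS RS (n + 1) = robPos CS RS n ∨
      G.Adj (robPos CS RS n) (robPos CS RS (n + 1)) := by
  rw [robPos_succ]
  exact hRS (robPos CS RS n)
    (copPos CS RS (n + 1) :: copPos CS RS n :: (play CS RS n).2.2.1) (play CS RS n).2.2.2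

/-- A cop strategy determined by a function of the current cop and robber positions. -/
def copOfFun (v0 : V) (f : V → V → V) : CopStrategy V where
  init := v0
  move := fun ch rh =>
    match ch, rh with
    | c' :: _, r :: _ => f c' r
    | c' :: _, [] => c'
    | [], _ => v0

lemma copOfFun_legal (v0 : V) {f : V → V → V}
    (hf : ∀ c' r, f c' r = c' ∨ G.Adj c' (f c' r)) : (copOfFun v0 f).Legal G := by
  intro c' ch rh
  cases rh with
  | nil => exact Or.inl rfl
  | cons r t => exact hf c' r

lemma copOfFun_init (v0 : V) (f : V → V → V) : (copOfFun v0 f).init = v0 := rfl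

lemma copOfFun_pos (v0 : V) (f : V → V → V) (RS : RobberStrategy V) (n : ℕ) :
    copPos (copOfFun v0 f) RS (n + 1) =
      f (copPos (copOfFun v0 f) RS n) (robPos (copOfFun v0 f) RS n) := rfl

/-- A robber strategy determined by an initial-choice function and a function of the
current cop and robber positions. -/
def robOfFun (v0 : V) (iF : V → V) (f : V → V → V) : RobberStrategy V where
  init := iF
  move := fun ch rh =>
    match ch, rh with
    | c' :: _, r :: _ => f c' r
    | [], r :: _ => r
    | _, [] => v0

lemma robOfFun_legal {v0 : V} {iF : V → V} {f : V → V → V}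
    (hf : ∀ c' r, f c' r = r ∨ G.Adj r (f c' r)) : (robOfFun v0 iF f).Legal G := by
  intro r ch rh
  cases ch with
  | nil => exact Or.inl rfl
  | cons c' t => exact hf c' r

lemma robOfFun_pos_zero (CS : CopStrategy V) (v0 : V) (iF : V → V) (f : V → V → V) :
    robPos CS (robOfFun v0 iF f) 0 = iF CS.init := rfl

lemma robOfFun_pos (CS : CopStrategy V) (v0 : V) (iF : V → V) (f : V → V → V) (n : ℕ) :
    robPos CS (robOfFun v0 iF f) (n + 1) =
      f (copPos CS (robOfFun v0 iF f) (n + 1)) (robPos CS (robOfFun v0 iF f) n) := rfl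

lemma dist_le_one_of_mem_cN (hG : G.Connected) {v w : V} (h : w ∈ cN G v) :
    G.dist v w ≤ 1 := by
  rcases mem_cN.mp h with rfl | h
  · simp [SimpleGraph.dist_self]
  · exact le_of_eq (SimpleGraph.dist_eq_one_iff_adj.mpr h)

lemma not_mem_cN_of_two_le_dist {v w : V} (h : 2 ≤ G.dist v w) : w ∉ cN G v := by
  intro hm
  rcases mem_cN.mp hm with rfl | hadj
  · simp [SimpleGraph.dist_self] at h
  · rw [SimpleGraph.dist_eq_one_iff_adj.mpr hadj] at h; omega

lemma two_le_dist_of_not_mem_cN (hG : G.Connected) {v w : V} (h : w ∉ cN G v) :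
    2 ≤ G.dist v w := by
  have h0 : G.dist v w ≠ 0 := by
    intro h0
    exact h (mem_cN.mpr (Or.inl ((hG.dist_eq_zero_iff).mp h0).symm))
  have h1 : G.dist v w ≠ 1 := by
    intro h1
    exact h (mem_cN.mpr (Or.inr (SimpleGraph.dist_eq_one_iff_adj.mp h1)))
  omega

variable [Fintype V]

lemma dist_le_ecc (v w : V) : G.dist v w ≤ ecc G v :=
  le_csSup ((Set.finite_range _).bddAbove) ⟨w, rfl⟩

lemma exists_dist_eq_ecc (v : V) : ∃ w, G.dist v w = ecc G v := by
  have h : ecc G v ∈ Set.range (G.dist v) :=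
    Nat.sSup_mem ⟨G.dist v v, v, rfl⟩ ((Set.finite_range _).bddAbove)
  exact h

lemma gRadius_le_ecc (v : V) : gRadius G ≤ ecc G v := Nat.sInf_le ⟨v, rfl⟩

lemma ecc_le_two (hG : G.Connected) (c : V)
    (h : ∀ w ∉ cN G c, ∀ t, G.Adj w t → G.dist c t ≤ 2) : ecc G c ≤ 2 := by
  have key : ∀ u : V, G.dist c u ≤ 2 := by
    intro u
    by_contra hlt
    push_neg at hlt
    have h3 : 3 ≤ G.dist c u := hlt
    -- find a neighbour of `u` strictly closer to `c`
    obtain ⟨p, hp⟩ := hG.exists_walk_length_eq_dist c u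
    have hne : ¬ (p.reverse.length = 0) := by
      rw [SimpleGraph.Walk.length_reverse, hp]; omega
    obtain ⟨x, hadj, q, hq⟩ : ∃ (x : V) (hadj : G.Adj u x) (q : G.Walk x c),
        p.reverse.length = q.length + 1 := by
      cases hq : p.reverse with
      | nil => rw [hq] at hne; simp at hne
      | cons hadj q => exact ⟨_, hadj, q, by simp [hq]⟩
    have hxq : G.dist c x ≤ q.length := by
      have := SimpleGraph.dist_le q.reverse
      simpa [SimpleGraph.Walk.length_reverse] using this
    have hqlen : q.length + 1 = G.dist c u := by
      rw [← hq, SimpleGraph.Walk.length_reverse, hp]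
    have htri : G.dist c u ≤ G.dist c x + 1 := by
      have h1 : G.dist x u ≤ 1 :=
        SimpleGraph.dist_le (SimpleGraph.Walk.cons hadj.symm SimpleGraph.Walk.nil)
      calc G.dist c u ≤ G.dist c x + G.dist x u := hG.dist_triangle
        _ ≤ G.dist c x + 1 := by omega
    have hx2 : 2 ≤ G.dist c x := by omega
    have hxn : x ∉ cN G c := not_mem_cN_of_two_le_dist hx2
    have := h x hxn u hadj.symm
    omega
  refine csSup_le ⟨G.dist c c, c, rfl⟩ ?_
  rintro x ⟨u, rfl⟩
  exact key u

/-- If some vertex's closed neighbourhood is everything, the chasing cop allows no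
damage at all. -/
lemma zero_bound_of_univ (hG : G.Connected) (v : V) (huniv : ∀ w : V, w ∈ cN G v) :
    ∃ CS : CopStrategy V, CS.Legal G ∧
      ∀ RS : RobberStrategy V, RS.Legal G → (damageSet CS RS).ncard ≤ 0 := by
  classical
  obtain ⟨f, hfval⟩ : ∃ f : V → V → V,
      ∀ c' r, f c' r = if G.Adj c' r then r else c' := ⟨_, fun _ _ => rfl⟩
  refine ⟨copOfFun v f, ?_, ?_⟩
  · refine copOfFun_legal v ?_
    intro c' r
    rw [hfval]
    by_cases h : G.Adj c' r
    · rw [if_pos h]; exact Or.inr h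
    · rw [if_neg h]; exact Or.inl rfl
  · intro RS hRS
    have hempty : damageSet (copOfFun v f) RS = ∅ := by
      ext u
      simp only [damageSet, Set.mem_setOf_eq, Set.mem_empty_iff_false, iff_false]
      rintro ⟨n, -, hnc⟩
      obtain ⟨h00, h01⟩ := hnc 0 (Nat.zero_le n)
      rcases mem_cN.mp (huniv (robPos (copOfFun v f) RS 0)) with h | h
      · exact h00 (by rw [copPos_zero, copOfFun_init]; exact h.symm)
      · apply h01
        rw [copOfFun_pos, hfval, if_pos (by rw [copPos_zero, copOfFun_init]; exact h)]
    rw [hempty]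
    simp

/-- A robber that starts outside the cop's closed neighbourhood and passes forever
damages at least one vertex. -/
lemma damage_pos_of_far (hG : G.Connected) {CS : CopStrategy V} (hCS : CS.Legal G)
    {w : V} (hw : w ∉ cN G CS.init) :
    ∃ RS : RobberStrategy V, RS.Legal G ∧ 1 ≤ (damageSet CS RS).ncard := by
  classical
  refine ⟨robOfFun w (fun _ => w) (fun _ r => r),
    robOfFun_legal (fun _ r => Or.inl rfl), ?_⟩
  have hr : ∀ n, robPos CS (robOfFun w (fun _ => w) (fun _ r => r)) n = w := by
    intro n
    induction n with
    | zero => rfl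
    | succ n ih => rw [robOfFun_pos]; exact ih
  have hd : w ∈ damageSet CS (robOfFun w (fun _ => w) (fun _ r => r)) := by
    refine ⟨0, hr 0, ?_⟩
    intro k hk
    interval_cases k
    constructor
    · rw [copPos_zero, hr 0]
      intro h
      exact hw (mem_cN.mpr (Or.inl h.symm))
    · rw [hr 0]
      rcases cop_step hCS (robOfFun w (fun _ => w) (fun _ r => r)) 0 with h | h
      · rw [h, copPos_zero]
        intro h'
        exact hw (mem_cN.mpr (Or.inl h'.symm))
      · rw [copPos_zero] at h
        intro h'
        exact hw (mem_cN.mpr (Or.inr (h' ▸ h)))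
  have : 0 < (damageSet CS (robOfFun w (fun _ => w) (fun _ r => r))).ncard :=
    (Set.ncard_pos (Set.toFinite _)).mpr ⟨w, hd⟩
  omega

/-- Key lemma for necessity: if the cop guarantees at most one damaged vertex, then its
round-one reply to a robber starting at `w ∉ N[c]` must dominate `w`. -/
lemma round_one_dominates (hG : G.Connected) {CS : CopStrategy V} (hCS : CS.Legal G)
    (hB : ∀ RS : RobberStrategy V, RS.Legal G → (damageSet CS RS).ncard ≤ 1)
    {w : V} (hw : w ∉ cN G CS.init) :
    CS.move [CS.init] [w] ∈ cN G CS.init ∧ Dominates G (CS.move [CS.init] [w]) w := by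
  classical
  have hsmem : CS.move [CS.init] [w] ∈ cN G CS.init := by
    rcases hCS CS.init [] [w] with h | h
    · exact mem_cN.mpr (Or.inl h)
    · exact mem_cN.mpr (Or.inr h)
  refine ⟨hsmem, ?_⟩
  intro t ht
  rw [SimpleGraph.mem_neighborSet] at ht
  by_contra htn
  obtain ⟨f, hfval⟩ : ∃ f : V → V → V,
      ∀ c' r, f c' r = if r = w then t else r := ⟨_, fun _ _ => rfl⟩
  -- the robber starts at `w`, moves to `t` in round one, then stays at `t`
  have hRSlegal : (robOfFun w (fun _ => w) f).Legal G := by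
    refine robOfFun_legal ?_
    intro c' r
    rw [hfval]
    by_cases h : r = w
    · rw [if_pos h]; subst h; exact Or.inr ht
    · rw [if_neg h]; exact Or.inl rfl
  set RS := robOfFun w (fun _ => w) f with hRSdef
  have hrob0 : robPos CS RS 0 = w := by rw [hRSdef, robOfFun_pos_zero]
  have hcop0 : copPos CS RS 0 = CS.init := copPos_zero CS RS
  have hcop1 : copPos CS RS 1 = CS.move [CS.init] [w] := by
    rw [copPos_succ]
    have h1 : (play CS RS 0).2.2.1 = ([] : List V) := rfl
    have h2 : (play CS RS 0).2.2.2 = ([] : List V) := rfl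
    rw [h1, h2, hcop0, hrob0]
  have htw : t ≠ w := fun h => (G.ne_of_adj ht) h.symm
  have hrob1 : robPos CS RS 1 = t := by
    rw [hRSdef, robOfFun_pos, ← hRSdef, hrob0, hfval, if_pos rfl]
  have hwc : w ≠ CS.init := fun h => hw (mem_cN.mpr (Or.inl h))
  have hsw : CS.move [CS.init] [w] ≠ w := fun h => hw (h ▸ hsmem)
  have hts : t ∉ cN G (CS.move [CS.init] [w]) := htn
  have hcop2 : copPos CS RS 2 ≠ t := by
    rcases cop_step hCS RS 1 with h | h
    · rw [h, hcop1]
      intro h'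
      exact hts (mem_cN.mpr (Or.inl h'.symm))
    · rw [hcop1] at h
      intro h'
      exact hts (mem_cN.mpr (Or.inr (h' ▸ h)))
  have hk0 : copPos CS RS 0 ≠ robPos CS RS 0 ∧ copPos CS RS 1 ≠ robPos CS RS 0 := by
    rw [hcop0, hcop1, hrob0]
    exact ⟨fun h => hwc h.symm, hsw⟩
  have hdw : w ∈ damageSet CS RS := by
    refine ⟨0, hrob0, ?_⟩
    intro k hk
    interval_cases k
    exact hk0
  have hdt : t ∈ damageSet CS RS := by
    refine ⟨1, hrob1, ?_⟩
    intro k hk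
    interval_cases k
    · exact hk0
    · rw [hcop1, hrob1]
      exact ⟨fun h => hts (mem_cN.mpr (Or.inl h.symm)), hcop2⟩
  have hsub : ({w, t} : Set V) ⊆ damageSet CS RS := by
    rintro x (rfl | rfl)
    · exact hdw
    · exact hdt
  have h2 : 2 ≤ (damageSet CS RS).ncard := by
    have := Set.ncard_le_ncard hsub (Set.toFinite _)
    rwa [Set.ncard_pair (fun h => htw h.symm)] at this
  have := hB RS hRSlegal
  omega

/-- Sufficiency: from a suitable center, the cop can limit the damage to one vertex. -/
lemma cop_bound (hG : G.Connected) (c : V)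
    (hdom : ∀ w ∉ cN G c, ∃ s ∈ cN G c, Dominates G s w) :
    ∃ CS : CopStrategy V, CS.Legal G ∧
      ∀ RS : RobberStrategy V, RS.Legal G → (damageSet CS RS).ncard ≤ 1 := by
  classical
  -- choose a dominating vertex for each far robber position
  have hchoice : ∀ w : V, ∃ s : V, w ∉ cN G c → s ∈ cN G c ∧ Dominates G s w := by
    intro w
    by_cases h : w ∉ cN G c
    · obtain ⟨s, hs1, hs2⟩ := hdom w h
      exact ⟨s, fun _ => ⟨hs1, hs2⟩⟩
    · exact ⟨c, fun h' => absurd h' h⟩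
  choose sF hsF using hchoice
  obtain ⟨f, hfval⟩ : ∃ f : V → V → V, ∀ c' r, f c' r =
      if G.Adj c' r then r else if sF r = c' ∨ G.Adj c' (sF r) then sF r else c' :=
    ⟨_, fun _ _ => rfl⟩
  have hCSlegal : (copOfFun c f).Legal G := by
    refine copOfFun_legal c ?_
    intro c' r
    rw [hfval]
    by_cases h1 : G.Adj c' r
    · rw [if_pos h1]; exact Or.inr h1
    · rw [if_neg h1]
      by_cases h2 : sF r = c' ∨ G.Adj c' (sF r)
      · rw [if_pos h2]
        exact h2
      · rw [if_neg h2]; exact Or.inl rfl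
  refine ⟨copOfFun c f, hCSlegal, ?_⟩
  intro RS hRS
  set CS := copOfFun c f with hCSdef
  have hrob0 : robPos CS RS 0 = RS.init c := by rw [hCSdef, robPos_zero, copOfFun_init]
  have hcop0 : copPos CS RS 0 = c := by rw [hCSdef, copPos_zero, copOfFun_init]
  have hcopstep : ∀ n, copPos CS RS (n + 1) = f (copPos CS RS n) (robPos CS RS n) := by
    intro n
    rw [hCSdef, copOfFun_pos]
  by_cases h0 : RS.init c ∈ cN G c
  · -- immediate capture: no damage at all
    have hempty : damageSet CS RS = ∅ := by
      ext u
      simp only [damageSet, Set.mem_setOf_eq, Set.mem_empty_iff_false, iff_false]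
      rintro ⟨n, -, hnc⟩
      obtain ⟨h00, h01⟩ := hnc 0 (Nat.zero_le n)
      rcases mem_cN.mp h0 with h | h
      · exact h00 (by rw [hcop0, hrob0, h])
      · apply h01
        rw [hcopstep 0, hfval, hrob0, if_pos (by rw [hcop0]; exact h)]
    rw [hempty]
    simp
  · -- far start: the cop camps on a dominating vertex
    obtain ⟨hsmem, hsdom⟩ := hsF (RS.init c) h0
    have hnadj : ¬ G.Adj c (RS.init c) := fun h => h0 (mem_cN.mpr (Or.inr h))
    have hcop1 : copPos CS RS 1 = sF (RS.init c) := by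
      rw [hcopstep 0, hfval, hcop0, hrob0, if_neg hnadj, if_pos]
      rcases mem_cN.mp hsmem with h | h
      · exact Or.inl h
      · exact Or.inr h
    -- an auxiliary step lemma for the robber
    have hrobstep : ∀ m : ℕ, robPos CS RS m = RS.init c →
        copPos CS RS (m + 1) = sF (RS.init c) →
        (∀ k ≤ m + 1, copPos CS RS k ≠ robPos CS RS k ∧
          copPos CS RS (k + 1) ≠ robPos CS RS k) →
        robPos CS RS (m + 1) = RS.init c := by
      intro m hrm hcm hnc
      rcases rob_step CS hRS m with h | h
      · rw [h, hrm]
      · rw [hrm] at h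
        -- the robber moved to a neighbour of its start, hence into `N[σ]`
        have hmem : robPos CS RS (m + 1) ∈ cN G (sF (RS.init c)) := hsdom h
        rcases mem_cN.mp hmem with heq | hadj
        · exact absurd (by rw [hcm, heq]) (hnc (m + 1) le_rfl).1
        · exact absurd (by rw [hcopstep (m + 1), hcm, hfval, if_pos hadj])
            (hnc (m + 1) le_rfl).2
    -- invariant: while uncaptured, the cop is at `σ` and the robber at its start
    have hinv : ∀ n : ℕ,
        (∀ k ≤ n + 1, copPos CS RS k ≠ robPos CS RS k ∧
          copPos CS RS (k + 1) ≠ robPos CS RS k) →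
        copPos CS RS (n + 1) = sF (RS.init c) ∧ robPos CS RS (n + 1) = RS.init c := by
      intro n
      induction n with
      | zero =>
        intro hnc
        exact ⟨hcop1, hrobstep 0 hrob0 hcop1 hnc⟩
      | succ n ih =>
        intro hnc
        have hnc' : ∀ k ≤ n + 1, copPos CS RS k ≠ robPos CS RS k ∧
            copPos CS RS (k + 1) ≠ robPos CS RS k :=
          fun k hk => hnc k (by omega)
        obtain ⟨ihc, ihr⟩ := ih hnc'
        have hcop2 : copPos CS RS (n + 2) = sF (RS.init c) := by
          rw [hcopstep (n + 1), ihc, ihr, hfval]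
          by_cases hA : G.Adj (sF (RS.init c)) (RS.init c)
          · exact absurd
              (by rw [hcopstep (n + 1), ihc, ihr, hfval, if_pos hA])
              (hnc (n + 1) (by omega)).2
          · rw [if_neg hA, if_pos (Or.inl rfl)]
        exact ⟨hcop2, hrobstep (n + 1) ihr hcop2 hnc⟩
    have hsub : damageSet CS RS ⊆ {RS.init c} := by
      rintro v ⟨n, hv, hnc⟩
      cases n with
      | zero => exact Set.mem_singleton_iff.mpr (by rw [← hv, hrob0])
      | succ n => exact Set.mem_singleton_iff.mpr (by rw [← hv, (hinv n hnc).2])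
    calc (damageSet CS RS).ncard ≤ ({RS.init c} : Set V).ncard :=
          Set.ncard_le_ncard hsub (Set.toFinite _)
      _ = 1 := Set.ncard_singleton _

end Aux

/-- For a finite connected graph `G`, `dmg(G) = 1` if and only if `rad(G) = 2` and some
center `c` of `G` is such that every `w ∈ V(G) \ N[c]` is dominated by some
`s ∈ N[c]`. -/
theorem dmg_eq_one_iff {V : Type*} [Fintype V] (G : SimpleGraph V) (hG : G.Connected) :
    dmg G = 1 ↔ gRadius G = 2 ∧ ∃ c : V, ecc G c = gRadius G ∧
      ∀ w ∉ cN G c, ∃ s ∈ cN G c, Dominates G s w := by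
  classical
  have hVne : Nonempty V := hG.nonempty
  set S : Set ℕ := { n | ∃ CS : CopStrategy V, CS.Legal G ∧
    ∀ RS : RobberStrategy V, RS.Legal G → (damageSet CS RS).ncard ≤ n } with hSdef
  have hdmg : dmg G = sInf S := rfl
  constructor
  · intro h1
    have hSne : S.Nonempty := by
      by_contra h
      rw [Set.not_nonempty_iff_eq_empty] at h
      rw [hdmg, h, Nat.sInf_empty] at h1
      exact absurd h1 (by omega)
    have h1S : 1 ∈ S := by
      have := Nat.sInf_mem hSne
      rwa [← hdmg, h1] at this
    have h0S : 0 ∉ S := by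
      intro h
      have := Nat.sInf_le h
      rw [← hdmg, h1] at this
      omega
    obtain ⟨CS, hCSL, hCSB⟩ := h1S
    -- every closed neighbourhood is proper
    have hnontriv : ∀ v : V, ∃ w, w ∉ cN G v := by
      intro v
      by_contra h
      push_neg at h
      obtain ⟨CS', hL', hB'⟩ := zero_bound_of_univ hG v h
      exact h0S ⟨CS', hL', hB'⟩
    -- hence every eccentricity is at least 2
    have hecc2 : ∀ v : V, 2 ≤ ecc G v := by
      intro v
      obtain ⟨w, hw⟩ := hnontriv v
      exact le_trans (two_le_dist_of_not_mem_cN hG hw) (dist_le_ecc v w)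
    have hrad2 : 2 ≤ gRadius G := by
      have hmem : gRadius G ∈ Set.range (ecc G) :=
        Nat.sInf_mem (Set.range_nonempty (ecc G))
      obtain ⟨v, hv⟩ := hmem
      rw [← hv]
      exact hecc2 v
    -- the dominating-vertex property of the cop's initial vertex
    have hA : ∀ w ∉ cN G CS.init, ∃ s ∈ cN G CS.init, Dominates G s w := by
      intro w hw
      obtain ⟨h1', h2'⟩ := round_one_dominates hG hCSL hCSB hw
      exact ⟨_, h1', h2'⟩
    -- the cop's initial vertex has eccentricity at most 2
    have heccle : ecc G CS.init ≤ 2 := by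
      refine ecc_le_two hG CS.init ?_
      intro w hw t hadj
      obtain ⟨s, hs1, hs2⟩ := hA w hw
      have hts : t ∈ cN G s := hs2 (by rwa [SimpleGraph.mem_neighborSet])
      calc G.dist CS.init t ≤ G.dist CS.init s + G.dist s t := hG.dist_triangle
        _ ≤ 1 + 1 := add_le_add (dist_le_one_of_mem_cN hG hs1)
              (dist_le_one_of_mem_cN hG hts)
        _ = 2 := rfl
    have hre : gRadius G = 2 :=
      le_antisymm (le_trans (gRadius_le_ecc CS.init) heccle) hrad2
    have heq : ecc G CS.init = gRadius G := by
      rw [hre]; exact le_antisymm heccle (hecc2 CS.init)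
    exact ⟨hre, CS.init, heq, hA⟩
  · rintro ⟨hrad, c, hecc, hdom⟩
    have h1S : 1 ∈ S := by
      obtain ⟨CS, hL, hB⟩ := cop_bound hG c hdom
      exact ⟨CS, hL, hB⟩
    have h0S : 0 ∉ S := by
      rintro ⟨CS, hL, hB⟩
      have hle : 2 ≤ ecc G CS.init := by
        have := gRadius_le_ecc (G := G) CS.init
        omega
      obtain ⟨w, hw⟩ := exists_dist_eq_ecc (G := G) CS.init
      have hwfar : w ∉ cN G CS.init := not_mem_cN_of_two_le_dist (by omega)
      obtain ⟨RS, hRL, hpos⟩ := damage_pos_of_far hG hL hwfar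
      have := hB RS hRL
      omega
    have hle : sInf S ≤ 1 := Nat.sInf_le h1S
    have hmem : sInf S ∈ S := Nat.sInf_mem ⟨1, h1S⟩
    have hne : sInf S ≠ 0 := fun h => h0S (h ▸ hmem)
    rw [hdmg]
    omega
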